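/- Let t ↦ (x_t, y_t) be the unique solution of the ODE ż = B(z) with initial condition (x∘, y∘) ∈ S, which is defined for all t ≥ 0. Then (x_t, y_t) → (x_∞, 0) as t → ∞; i.e., the equilibrium (x_∞, 0) is globally asymptotically stable for the dynamics on S. -/

import Mathlib

open Real Set Filter Topology

/-- The optimal-velocity function `V(x) = tanh(x-2) - tanh(-2)`. -/
noncomputable def V (x : ℝ) : ℝ := Real.tanh (x - 2) - Real.tanh (-2)

/-- Inverse hyperbolic tangent. -/
noncomputable def artanh (v : ℝ) : ℝ := (1 / 2) * Real.log ((1 + v) / (1 - v))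

/-- The equilibrium following distance `x_∞ = d (2 + artanh(v∘ + tanh(-2)))`. -/
noncomputable def xInf (d v₀ : ℝ) : ℝ := d * (2 + _root_.artanh (v₀ + Real.tanh (-2)))

set_option maxHeartbeats 2000000

lemma tanh_formula (x : ℝ) : Real.tanh x = (Real.exp (2*x) - 1) / (Real.exp (2*x) + 1) := by
  rw [Real.tanh_eq_sinh_div_cosh, Real.sinh_eq, Real.cosh_eq, Real.exp_neg]
  have h1 : Real.exp x ≠ 0 := (Real.exp_pos x).ne'
  have h2 : Real.exp (2*x) = Real.exp x * Real.exp x := by rw [two_mul, Real.exp_add]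
  have h3 : (0:ℝ) < Real.exp (2*x) + 1 := by positivity
  have h4 : Real.exp x + (Real.exp x)⁻¹ ≠ 0 := by positivity
  rw [h2] at h3 ⊢
  field_simp

lemma tanh_abs_lt_one (x : ℝ) : |Real.tanh x| < 1 := by
  rw [tanh_formula, abs_div, abs_of_pos (by positivity : (0:ℝ) < Real.exp (2*x) + 1),
    div_lt_one (by positivity)]
  have := Real.exp_pos (2*x)
  rcases abs_cases (Real.exp (2*x) - 1) with ⟨h, _⟩ | ⟨h, _⟩ <;> linarith

lemma tanh_strictMono : StrictMono Real.tanh := by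
  intro a b hab
  rw [tanh_formula, tanh_formula]
  have ha : (0:ℝ) < Real.exp (2*a) := Real.exp_pos _
  have hb : (0:ℝ) < Real.exp (2*b) := Real.exp_pos _
  have h : Real.exp (2*a) < Real.exp (2*b) := Real.exp_lt_exp.2 (by linarith)
  rw [div_lt_div_iff₀ (by positivity) (by positivity)]
  nlinarith

lemma tanh_artanh {w : ℝ} (h1 : -1 < w) (h2 : w < 1) : Real.tanh (_root_.artanh w) = w := by
  have hw1 : (0:ℝ) < 1 + w := by linarith
  have hw2 : (0:ℝ) < 1 - w := by linarith
  have hr : (0:ℝ) < (1 + w) / (1 - w) := by positivity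
  have : Real.exp (2 * _root_.artanh w) = (1 + w) / (1 - w) := by
    rw [_root_.artanh]
    rw [show 2 * ((1/2 : ℝ) * Real.log ((1 + w) / (1 - w))) = Real.log ((1+w)/(1-w)) by ring]
    exact Real.exp_log hr
  rw [tanh_formula, this]
  field_simp
  ring

lemma continuous_tanh' : Continuous Real.tanh := by
  have : Real.tanh = fun x => Real.sinh x / Real.cosh x := by
    funext x; exact Real.tanh_eq_sinh_div_cosh x
  rw [this]
  exact Real.continuous_sinh.div Real.continuous_cosh fun x => (Real.cosh_pos x).ne'

lemma continuous_V : Continuous V :=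
  (continuous_tanh'.comp (continuous_id.sub continuous_const)).sub continuous_const

lemma V_strictMono : StrictMono V := fun a b h =>
  sub_lt_sub_right (tanh_strictMono (by linarith)) _

lemma V_xInf {d v₀ : ℝ} (hd : 0 < d) (hv₀ : v₀ ∈ Set.Ioo 0 (1 + Real.tanh 2)) :
    V (xInf d v₀ / d) = v₀ := by
  obtain ⟨h1, h2⟩ := hv₀
  have ht2 : (0:ℝ) < Real.tanh 2 := by
    have := tanh_strictMono (show (0:ℝ) < 2 by norm_num)
    simpa [Real.tanh_zero] using this
  have ht1 : Real.tanh 2 < 1 := (abs_lt.1 (tanh_abs_lt_one 2)).2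
  have hw1 : -1 < v₀ + Real.tanh (-2) := by rw [Real.tanh_neg]; linarith
  have hw2 : v₀ + Real.tanh (-2) < 1 := by rw [Real.tanh_neg]; linarith
  have hxd : xInf d v₀ / d = 2 + _root_.artanh (v₀ + Real.tanh (-2)) := by
    rw [xInf]; field_simp
  rw [hxd, V, show 2 + _root_.artanh (v₀ + Real.tanh (-2)) - 2 = _root_.artanh (v₀ + Real.tanh (-2)) by ring,
    tanh_artanh hw1 hw2]
  ring

lemma xInf_pos {d v₀ : ℝ} (hd : 0 < d) (hv₀ : v₀ ∈ Set.Ioo 0 (1 + Real.tanh 2)) :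
    0 < xInf d v₀ := by
  have h0 : V (0 / d) < V (xInf d v₀ / d) := by
    rw [V_xInf hd hv₀]
    have : V (0 / d) = 0 := by norm_num [V]
    rw [this]; exact hv₀.1
  have := V_strictMono.lt_iff_lt.mp h0
  rw [div_lt_div_iff_of_pos_right] at this
  · linarith
  · exact hd

lemma V_bound (v₀ z : ℝ) (hv₀ : v₀ ∈ Set.Ioo 0 (1 + Real.tanh 2)) : |V z - v₀| ≤ 4 := by
  have h1 := tanh_abs_lt_one (z - 2)
  have h2 := tanh_abs_lt_one (-2)
  obtain ⟨hv1, hv2⟩ := hv₀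
  have ht1 : Real.tanh 2 < 1 := (abs_lt.1 (tanh_abs_lt_one 2)).2
  rw [abs_lt] at h1 h2
  rw [V]
  rw [abs_le]
  constructor <;> nlinarith

noncomputable def Wf (d v₀ : ℝ) (z : ℝ) : ℝ := ∫ s in xInf d v₀..z, (V (s/d) - v₀)

lemma continuous_integrand (d v₀ : ℝ) : Continuous fun s : ℝ => V (s/d) - v₀ :=
  (continuous_V.comp (continuous_id.div_const d)).sub continuous_const

lemma integrand_pos {d v₀ : ℝ} (hd : 0 < d) (hv₀ : v₀ ∈ Set.Ioo 0 (1 + Real.tanh 2))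
    {s : ℝ} (hs : xInf d v₀ < s) : 0 < V (s/d) - v₀ := by
  have := V_strictMono (div_lt_div_of_pos_right hs hd)
  rw [V_xInf hd hv₀] at this
  linarith

lemma integrand_nonpos {d v₀ : ℝ} (hd : 0 < d) (hv₀ : v₀ ∈ Set.Ioo 0 (1 + Real.tanh 2))
    {s : ℝ} (hs : s ≤ xInf d v₀) : V (s/d) - v₀ ≤ 0 := by
  rcases eq_or_lt_of_le hs with h | h
  · rw [h, V_xInf hd hv₀]; simp
  · have := V_strictMono (div_lt_div_of_pos_right h hd)
    rw [V_xInf hd hv₀] at this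
    linarith

lemma integrand_nonneg {d v₀ : ℝ} (hd : 0 < d) (hv₀ : v₀ ∈ Set.Ioo 0 (1 + Real.tanh 2))
    {s : ℝ} (hs : xInf d v₀ ≤ s) : 0 ≤ V (s/d) - v₀ := by
  rcases eq_or_lt_of_le hs with h | h
  · rw [← h, V_xInf hd hv₀]; simp
  · exact le_of_lt (integrand_pos hd hv₀ h)

lemma Wf_hasDerivAt (d v₀ : ℝ) (z : ℝ) : HasDerivAt (Wf d v₀) (V (z/d) - v₀) z :=
  ((continuous_integrand d v₀).integral_hasStrictDerivAt (xInf d v₀) z).hasDerivAt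

lemma Wf_xInf (d v₀ : ℝ) : Wf d v₀ (xInf d v₀) = 0 := by
  simp [Wf]

lemma Wf_diff (d v₀ : ℝ) (a b : ℝ) :
    Wf d v₀ b - Wf d v₀ a = ∫ s in a..b, (V (s/d) - v₀) := by
  rw [Wf, Wf, ← intervalIntegral.integral_add_adjacent_intervals
    ((continuous_integrand d v₀).intervalIntegrable (xInf d v₀) a)
    ((continuous_integrand d v₀).intervalIntegrable a b)]
  ring

lemma Wf_nonneg {d v₀ : ℝ} (hd : 0 < d) (hv₀ : v₀ ∈ Set.Ioo 0 (1 + Real.tanh 2)) (z : ℝ) :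
    0 ≤ Wf d v₀ z := by
  rcases le_total (xInf d v₀) z with h | h
  · exact intervalIntegral.integral_nonneg h fun u hu => integrand_nonneg hd hv₀ hu.1
  · rw [Wf, intervalIntegral.integral_symm, ← intervalIntegral.integral_neg]
    exact intervalIntegral.integral_nonneg h fun u hu => by
      have := integrand_nonpos hd hv₀ hu.2; linarith

lemma Wf_pos {d v₀ : ℝ} (hd : 0 < d) (hv₀ : v₀ ∈ Set.Ioo 0 (1 + Real.tanh 2)) {z : ℝ}
    (hz : z ≠ xInf d v₀) : 0 < Wf d v₀ z := by
  rcases lt_or_gt_of_ne hz with h | h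
  · rw [Wf, intervalIntegral.integral_symm, ← intervalIntegral.integral_neg]
    refine intervalIntegral.intervalIntegral_pos_of_pos_on
      (((continuous_integrand d v₀).neg).intervalIntegrable z (xInf d v₀)) ?_ h
    intro s hs
    have := V_strictMono (div_lt_div_of_pos_right hs.2 hd)
    rw [V_xInf hd hv₀] at this
    linarith
  · exact intervalIntegral.intervalIntegral_pos_of_pos_on
      ((continuous_integrand d v₀).intervalIntegrable _ _)
      (fun s hs => integrand_pos hd hv₀ hs.1) h

lemma Wf_mono {d v₀ : ℝ} (hd : 0 < d) (hv₀ : v₀ ∈ Set.Ioo 0 (1 + Real.tanh 2)) {a b : ℝ}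
    (ha : xInf d v₀ ≤ a) (hab : a ≤ b) : Wf d v₀ a ≤ Wf d v₀ b := by
  have h := Wf_diff d v₀ a b
  have : 0 ≤ ∫ s in a..b, (V (s/d) - v₀) :=
    intervalIntegral.integral_nonneg hab fun u hu => integrand_nonneg hd hv₀ (le_trans ha hu.1)
  linarith

lemma Wf_anti {d v₀ : ℝ} (hd : 0 < d) (hv₀ : v₀ ∈ Set.Ioo 0 (1 + Real.tanh 2)) {a b : ℝ}
    (hab : a ≤ b) (hb : b ≤ xInf d v₀) : Wf d v₀ b ≤ Wf d v₀ a := by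
  have h := Wf_diff d v₀ a b
  have h2 : 0 ≤ ∫ s in a..b, -(V (s/d) - v₀) :=
    intervalIntegral.integral_nonneg hab fun u hu => by
      have := integrand_nonpos hd hv₀ (le_trans hu.2 hb); linarith
  rw [intervalIntegral.integral_neg] at h2
  linarith


/-- the equilibrium `(x_∞, 0)` is globally asymptotically stable: any
solution of `ż = B(z)` in `S = (0,∞) × ℝ`, defined for all `t ≥ 0`, converges to
`(x_∞, 0)` as `t → ∞`. -/
theorem global_asymptotic_stability (α β d v₀ : ℝ)
    (hα : 0 < α) (hβ : 0 < β) (hd : 0 < d)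
    (hv₀ : v₀ ∈ Set.Ioo 0 (1 + Real.tanh 2))
    (x y : ℝ → ℝ)
    (x₀ y₀ : ℝ) (hx₀ : 0 < x₀) (hinit : x 0 = x₀ ∧ y 0 = y₀)
    (hsol : ∀ t : ℝ, 0 ≤ t →
      0 < x t ∧ HasDerivAt x (y t) t ∧
        HasDerivAt y (-α * (V (x t / d) - v₀ + y t) - β * y t / (x t) ^ 2) t) :
    Tendsto (fun t => (x t, y t)) atTop (𝓝 (xInf d v₀, 0)) := by
  have hxIpos : 0 < xInf d v₀ := xInf_pos hd hv₀
  have hxpos : ∀ t, 0 ≤ t → 0 < x t := fun t ht => (hsol t ht).1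
  have hxd : ∀ t, 0 ≤ t → HasDerivAt x (y t) t := fun t ht => (hsol t ht).2.1
  have hyd : ∀ t, 0 ≤ t →
      HasDerivAt y (-α * (V (x t / d) - v₀ + y t) - β * y t / (x t) ^ 2) t :=
    fun t ht => (hsol t ht).2.2
  have hxcOn : ∀ a b : ℝ, 0 ≤ a → ContinuousOn x (Icc a b) := fun a b ha t ht =>
    ((hxd t (le_trans ha ht.1)).continuousAt).continuousWithinAt
  have hycOn : ∀ a b : ℝ, 0 ≤ a → ContinuousOn y (Icc a b) := fun a b ha t ht =>
    ((hyd t (le_trans ha ht.1)).continuousAt).continuousWithinAt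
  -- energy
  set E : ℝ → ℝ := fun t => (y t)^2/2 + α * Wf d v₀ (x t) with hEdef
  have hEd : ∀ t, 0 ≤ t →
      HasDerivAt E (-(α * (y t)^2) - β * (y t)^2/(x t)^2) t := by
    intro t ht
    have h1 : HasDerivAt (fun s => (y s)^2/2)
        (2 * y t ^ 1 * (-α * (V (x t / d) - v₀ + y t) - β * y t / (x t) ^ 2) / 2) t :=
      ((hyd t ht).pow 2).div_const 2
    have h2 : HasDerivAt (fun s => α * Wf d v₀ (x s))
        (α * ((V (x t / d) - v₀) * y t)) t :=
      (((Wf_hasDerivAt d v₀ (x t)).comp t (hxd t ht))).const_mul α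
    have h3 := h1.add h2
    refine h3.congr_deriv ?_
    have hx0 : (x t) ≠ 0 := (hxpos t ht).ne'
    ring
  have hEcont : ∀ a b : ℝ, 0 ≤ a → ContinuousOn E (Icc a b) := fun a b ha t ht =>
    ((hEd t (le_trans ha ht.1)).continuousAt).continuousWithinAt
  have hEanti : AntitoneOn E (Ici 0) := by
    refine antitoneOn_of_hasDerivWithinAt_nonpos (convex_Ici 0)
      (fun t ht => ((hEd t ht).continuousAt).continuousWithinAt)
      (f' := fun t => -(α * (y t)^2) - β * (y t)^2/(x t)^2) ?_ ?_
    · intro t ht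
      rw [interior_Ici] at ht
      exact ((hEd t (le_of_lt ht)).hasDerivWithinAt)
    · intro t ht
      rw [interior_Ici] at ht
      have hx := hxpos t (le_of_lt ht)
      have : 0 ≤ β * (y t)^2/(x t)^2 := by positivity
      nlinarith [sq_nonneg (y t)]
  have hEnonneg : ∀ t, 0 ≤ t → 0 ≤ E t := by
    intro t ht
    have := Wf_nonneg hd hv₀ (x t)
    have := sq_nonneg (y t)
    simp only [hEdef]
    positivity
  have hEle : ∀ t, 0 ≤ t → E t ≤ E 0 := fun t ht =>
    hEanti (self_mem_Ici) ht ht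
  -- velocity bound
  set Cy : ℝ := Real.sqrt (2 * E 0) with hCydef
  have hyb : ∀ t, 0 ≤ t → |y t| ≤ Cy := by
    intro t ht
    have h1 : (y t)^2 ≤ 2 * E 0 := by
      have h2 : (y t)^2/2 + α * Wf d v₀ (x t) ≤ (y 0)^2/2 + α * Wf d v₀ (x 0) := hEle t ht
      have h4 := Wf_nonneg hd hv₀ (x t)
      have h5 := Wf_nonneg hd hv₀ (x 0)
      show (y t)^2 ≤ 2 * ((y 0)^2/2 + α * Wf d v₀ (x 0))
      nlinarith [mul_nonneg hα.le h4, mul_nonneg hα.le h5]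
    calc |y t| = Real.sqrt ((y t)^2) := (Real.sqrt_sq_eq_abs _).symm
    _ ≤ Cy := Real.sqrt_le_sqrt h1
  -- extended velocity and dissipation integral
  set Y : ℝ → ℝ := fun t => y (max t 0) with hYdef
  have hYc : Continuous Y := by
    rw [continuous_iff_continuousAt]
    intro t
    exact ContinuousAt.comp ((hyd _ (le_max_right t 0)).continuousAt)
      ((continuous_id.max continuous_const).continuousAt)
  have hYy : ∀ t, 0 ≤ t → Y t = y t := by
    intro t ht; simp only [hYdef, max_eq_left ht]
  set g : ℝ → ℝ := fun t => ∫ s in (0:ℝ)..t, (Y s)^2 with hgdef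
  have hgd : ∀ t, HasDerivAt g ((Y t)^2) t := fun t =>
    ((hYc.pow 2).integral_hasStrictDerivAt 0 t).hasDerivAt
  have hgdiff : ∀ a b : ℝ, g b - g a = ∫ s in a..b, (Y s)^2 := by
    intro a b
    simp only [hgdef]
    rw [← intervalIntegral.integral_add_adjacent_intervals (f := fun s => Y s ^ 2)
      ((hYc.pow 2).intervalIntegrable 0 a) ((hYc.pow 2).intervalIntegrable a b)]
    ring
  have hgmono : Monotone g := by
    intro a b hab
    have h := hgdiff a b
    have : 0 ≤ ∫ s in a..b, (Y s)^2 :=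
      intervalIntegral.integral_nonneg hab fun u _ => sq_nonneg _
    linarith
  have hFanti : AntitoneOn (fun t => E t + α * g t) (Ici 0) := by
    refine antitoneOn_of_hasDerivWithinAt_nonpos (convex_Ici 0)
      (fun t ht => (((hEd t ht).add ((hgd t).const_mul α)).continuousAt).continuousWithinAt)
      (f' := fun t => (-(α * (y t)^2) - β * (y t)^2/(x t)^2) + α * (Y t)^2) ?_ ?_
    · intro t ht
      rw [interior_Ici] at ht
      exact ((hEd t (le_of_lt ht)).add ((hgd t).const_mul α)).hasDerivWithinAt
    · intro t ht
      rw [interior_Ici] at ht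
      show -(α * y t ^ 2) - β * y t ^ 2 / x t ^ 2 + α * Y t ^ 2 ≤ 0
      rw [hYy t (le_of_lt ht)]
      have hx := hxpos t (le_of_lt ht)
      have : 0 ≤ β * (y t)^2/(x t)^2 := by positivity
      nlinarith
  have hg0 : g 0 = 0 := by simp [hgdef]
  have hgle : ∀ t, 0 ≤ t → α * g t ≤ E 0 := by
    intro t ht
    have h := hFanti self_mem_Ici ht ht
    simp only [hg0, mul_zero, add_zero] at h
    have := hEnonneg t ht
    linarith
  have hgbdd : BddAbove (Set.range g) := by
    refine ⟨E 0 / α, ?_⟩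
    rintro _ ⟨t, rfl⟩
    rcases le_total 0 t with ht | ht
    · rw [le_div_iff₀ hα, mul_comm]
      exact hgle t ht
    · calc g t ≤ g 0 := hgmono ht
      _ = 0 := hg0
      _ ≤ E 0 / α := div_nonneg (hEnonneg 0 le_rfl) hα.le
  have hgG : Tendsto g atTop (𝓝 (⨆ t, g t)) := tendsto_atTop_ciSup hgmono hgbdd
  -- dissipation along intervals
  have hdiss : ∀ s t : ℝ, 0 ≤ s → s ≤ t → α * (g t - g s) ≤ E s - E t := by
    intro s t hs hst
    have := hFanti (mem_Ici.2 hs) (mem_Ici.2 (le_trans hs hst)) hst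
    simp only at this
    linarith
  -- bound on V term
  have hVb : ∀ t : ℝ, |V (x t / d) - v₀| ≤ 4 := fun t => V_bound v₀ _ hv₀
  set K : ℝ := 4 * α with hKdef
  have hKpos : 0 < K := by positivity
  -- y tends to zero
  have hy0 : Tendsto y atTop (𝓝 0) := by
    by_contra hcon
    rw [Metric.tendsto_atTop] at hcon
    push_neg at hcon
    obtain ⟨ε, hε, hcon⟩ := hcon
    simp only [Real.dist_eq, sub_zero] at hcon
    set τ : ℝ := ε / (4 * K) with hτdef
    have hτ : 0 < τ := by positivity
    have claim : ∀ t, τ ≤ t → ε ≤ |y t| → ∀ s ∈ Icc (t - τ) t, ε/2 ≤ |y s| := by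
      intro t ht hyt s hs
      by_contra hsle
      push_neg at hsle
      have hs0 : (0:ℝ) ≤ t - τ := by linarith
      have hss : (0:ℝ) ≤ s := le_trans hs0 hs.1
      have hst : s ≤ t := hs.2
      rcases le_abs.1 hyt with hpos | hneg
      · -- case y t ≥ ε
        set A : Set ℝ := Icc s t ∩ y ⁻¹' (Iic (ε/2)) with hAdef
        have hAclosed : IsClosed A :=
          (hycOn s t hss).preimage_isClosed_of_isClosed isClosed_Icc isClosed_Iic
        have hsA : s ∈ A := ⟨⟨le_refl s, hst⟩, le_of_lt (lt_of_le_of_lt (le_abs_self _) hsle)⟩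
        have hAbdd : BddAbove A := BddAbove.mono (inter_subset_left) bddAbove_Icc
        set c : ℝ := sSup A with hcdef
        have hcA : c ∈ A := hAclosed.csSup_mem ⟨s, hsA⟩ hAbdd
        have hcIcc : c ∈ Icc s t := hcA.1
        have hyc2 : y c ≤ ε/2 := hcA.2
        have hct : c < t := by
          rcases eq_or_lt_of_le hcIcc.2 with h | h
          · exfalso; rw [h] at hyc2; linarith
          · exact h
        have hmid : ∀ r, c < r → r ≤ t → ε/2 < y r := by
          intro r hcr hrt
          by_contra hyr
          push_neg at hyr
          have : r ∈ A := ⟨⟨le_trans hcIcc.1 hcr.le, hrt⟩, hyr⟩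
          exact absurd (le_csSup hAbdd this) (not_le.2 hcr)
        have hmono : MonotoneOn (fun r => K * r - y r) (Icc c t) := by
          refine monotoneOn_of_hasDerivWithinAt_nonneg (convex_Icc c t)
            (((continuous_const.mul continuous_id).continuousOn).sub
              (hycOn c t (le_trans hss hcIcc.1)))
            (f' := fun r => K - (-α * (V (x r / d) - v₀ + y r) - β * y r / (x r)^2)) ?_ ?_
          · intro r hr
            rw [interior_Icc] at hr
            have hr0 : (0:ℝ) ≤ r := le_trans hss (le_trans hcIcc.1 hr.1.le)
            exact (((hasDerivAt_id' r).const_mul K).sub (hyd r hr0)).hasDerivWithinAt.congr_deriv (by ring)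
          · intro r hr
            rw [interior_Icc] at hr
            have hr0 : (0:ℝ) ≤ r := le_trans hss (le_trans hcIcc.1 hr.1.le)
            have hyr : 0 < y r := lt_trans (by linarith) (hmid r hr.1 hr.2.le)
            have hxr := hxpos r hr0
            have hVr := abs_le.1 (hVb r)
            have hfrac : 0 ≤ β * y r / (x r)^2 :=
              div_nonneg (mul_nonneg hβ.le hyr.le) (sq_nonneg _)
            simp only [hKdef]
            nlinarith [mul_nonneg hα.le (show (0:ℝ) ≤ (V (x r / d) - v₀) + y r + 4 by linarith)]
        have hcompare := hmono (left_mem_Icc.2 hct.le) (right_mem_Icc.2 hct.le) hct.le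
        simp only at hcompare
        have hyt' : y t - y c ≤ K * (t - c) := by linarith
        have htc : t - c ≤ τ := by
          have := hcIcc.1
          have := hs.1
          linarith
        have : K * (t - c) ≤ K * τ := by
          apply mul_le_mul_of_nonneg_left htc hKpos.le
        rw [hτdef] at this
        have hKτ : K * (ε / (4 * K)) = ε/4 := by field_simp
        rw [hKτ] at this
        linarith
      · -- case y t ≤ -ε
        set A : Set ℝ := Icc s t ∩ y ⁻¹' (Ici (-(ε/2))) with hAdef
        have hAclosed : IsClosed A :=
          (hycOn s t hss).preimage_isClosed_of_isClosed isClosed_Icc isClosed_Ici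
        have hsA : s ∈ A := ⟨⟨le_refl s, hst⟩, by
          have := neg_abs_le (y s); simp only [mem_preimage, mem_Ici]; linarith⟩
        have hAbdd : BddAbove A := BddAbove.mono (inter_subset_left) bddAbove_Icc
        set c : ℝ := sSup A with hcdef
        have hcA : c ∈ A := hAclosed.csSup_mem ⟨s, hsA⟩ hAbdd
        have hcIcc : c ∈ Icc s t := hcA.1
        have hyc2 : -(ε/2) ≤ y c := hcA.2
        have hct : c < t := by
          rcases eq_or_lt_of_le hcIcc.2 with h | h
          · exfalso; rw [h] at hyc2; linarith
          · exact h
        have hmid : ∀ r, c < r → r ≤ t → y r < -(ε/2) := by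
          intro r hcr hrt
          by_contra hyr
          push_neg at hyr
          have : r ∈ A := ⟨⟨le_trans hcIcc.1 hcr.le, hrt⟩, hyr⟩
          exact absurd (le_csSup hAbdd this) (not_le.2 hcr)
        have hmono : MonotoneOn (fun r => K * r + y r) (Icc c t) := by
          refine monotoneOn_of_hasDerivWithinAt_nonneg (convex_Icc c t)
            (((continuous_const.mul continuous_id).continuousOn).add
              (hycOn c t (le_trans hss hcIcc.1)))
            (f' := fun r => K + (-α * (V (x r / d) - v₀ + y r) - β * y r / (x r)^2)) ?_ ?_
          · intro r hr
            rw [interior_Icc] at hr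
            have hr0 : (0:ℝ) ≤ r := le_trans hss (le_trans hcIcc.1 hr.1.le)
            exact (((hasDerivAt_id' r).const_mul K).add (hyd r hr0)).hasDerivWithinAt.congr_deriv (by ring)
          · intro r hr
            rw [interior_Icc] at hr
            have hr0 : (0:ℝ) ≤ r := le_trans hss (le_trans hcIcc.1 hr.1.le)
            have hyr : y r < 0 := lt_of_lt_of_le (hmid r hr.1 hr.2.le) (by linarith)
            have hxr := hxpos r hr0
            have hVr := abs_le.1 (hVb r)
            have hfrac : 0 ≤ β * (- y r) / (x r)^2 :=
              div_nonneg (mul_nonneg hβ.le (by linarith)) (sq_nonneg _)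
            have hfrac' : β * (- y r) / (x r)^2 = -(β * y r / (x r)^2) := by ring
            simp only [hKdef]
            nlinarith [mul_nonneg hα.le (show (0:ℝ) ≤ 4 - ((V (x r / d) - v₀) + y r) by linarith)]
        have hcompare := hmono (left_mem_Icc.2 hct.le) (right_mem_Icc.2 hct.le) hct.le
        simp only at hcompare
        have hyt' : y c - y t ≤ K * (t - c) := by linarith
        have htc : t - c ≤ τ := by
          have := hcIcc.1
          have := hs.1
          linarith
        have : K * (t - c) ≤ K * τ := by
          apply mul_le_mul_of_nonneg_left htc hKpos.le
        rw [hτdef] at this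
        have hKτ : K * (ε / (4 * K)) = ε/4 := by field_simp
        rw [hKτ] at this
        linarith
    -- pick recurrence times and contradict summability
    choose T hT1 hT2 using fun n : ℕ => hcon ((n : ℝ) + τ)
    have hTτ : ∀ n : ℕ, τ ≤ T n := fun n => le_trans (by
      have : (0:ℝ) ≤ (n:ℝ) := Nat.cast_nonneg n
      linarith) (hT1 n)
    have hint : ∀ n : ℕ, (ε/2)^2 * τ ≤ g (T n) - g (T n - τ) := by
      intro n
      rw [hgdiff]
      have h1 : ∀ s ∈ Icc (T n - τ) (T n), (ε/2)^2 ≤ (Y s)^2 := by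
        intro s hs
        have hs0 : (0:ℝ) ≤ s := le_trans (by linarith [hTτ n]) hs.1
        rw [hYy s hs0]
        have h2 := claim (T n) (hTτ n) (hT2 n) s hs
        calc (ε/2)^2 ≤ |y s|^2 := by
              apply pow_le_pow_left₀ (by linarith : (0:ℝ) ≤ ε/2) h2
        _ = (y s)^2 := sq_abs _
      have h3 : (∫ s in (T n - τ)..(T n), (ε/2)^2) ≤ ∫ s in (T n - τ)..(T n), (Y s)^2 := by
        apply intervalIntegral.integral_mono_on (by linarith)
          (intervalIntegrable_const) ((hYc.pow 2).intervalIntegrable _ _) h1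
      rw [intervalIntegral.integral_const, smul_eq_mul] at h3
      calc (ε/2)^2 * τ = (T n - (T n - τ)) * (ε/2)^2 := by ring
      _ ≤ _ := h3
    have hTtop : Tendsto (fun n : ℕ => T n) atTop atTop :=
      tendsto_atTop_mono (fun n => by
        have := hT1 n
        have : (n:ℝ) ≤ T n := by linarith
        exact this) tendsto_natCast_atTop_atTop
    have hTtop' : Tendsto (fun n : ℕ => T n - τ) atTop atTop :=
      tendsto_atTop_mono (fun n => by
        have h := hT1 n
        show (n:ℝ) ≤ T n - τ
        linarith) tendsto_natCast_atTop_atTop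
    have hlim : Tendsto (fun n : ℕ => g (T n) - g (T n - τ)) atTop (𝓝 0) := by
      have h1 := hgG.comp hTtop
      have h2 := hgG.comp hTtop'
      have := h1.sub h2
      simpa using this
    have hle : (ε/2)^2 * τ ≤ 0 := ge_of_tendsto hlim (Eventually.of_forall hint)
    have hp : 0 < (ε/2)^2 * τ := by positivity
    linarith
  -- energy limit
  set Et : ℝ → ℝ := fun t => E (max t 0) with hEtdef
  have hEtanti : Antitone Et := fun a b hab =>
    hEanti (mem_Ici.2 (le_max_right a 0)) (mem_Ici.2 (le_max_right b 0)) (max_le_max hab le_rfl)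
  have hEtbdd : BddBelow (Set.range Et) := ⟨0, by
    rintro _ ⟨t, rfl⟩; exact hEnonneg _ (le_max_right t 0)⟩
  set Einf : ℝ := ⨅ t, Et t with hEinfdef
  have hEtlim : Tendsto Et atTop (𝓝 Einf) := tendsto_atTop_ciInf hEtanti hEtbdd
  have hElim : Tendsto E atTop (𝓝 Einf) := by
    apply hEtlim.congr'
    filter_upwards [eventually_ge_atTop (0:ℝ)] with t ht
    simp only [hEtdef, max_eq_left ht]
  have hEinf_nonneg : 0 ≤ Einf := le_ciInf fun t => hEnonneg _ (le_max_right t 0)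
  have hEinf_le : ∀ t, 0 ≤ t → Einf ≤ E t := by
    intro t ht
    have h := ciInf_le hEtbdd t
    simp only [hEtdef, max_eq_left ht] at h
    exact h
  -- the auxiliary function u = y - β/x
  set u : ℝ → ℝ := fun t => y t - β / x t with hudef
  have hud : ∀ t, 0 ≤ t → HasDerivAt u (-α * (V (x t / d) - v₀ + y t)) t := by
    intro t ht
    have hx0 : x t ≠ 0 := (hxpos t ht).ne'
    have h1 : HasDerivAt (fun s => β / x s) (β * (-(y t) / (x t)^2)) t := by
      have h := ((hxd t ht).inv hx0).const_mul β
      rw [show (fun s => β / x s) = fun s => β * (x s)⁻¹ from funext fun s => div_eq_mul_inv _ _]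
      exact h
    have h2 := (hyd t ht).sub h1
    refine h2.congr_deriv ?_
    ring
  have hucOn : ∀ a b : ℝ, 0 ≤ a → ContinuousOn u (Icc a b) := fun a b ha t ht =>
    ((hud t (le_trans ha ht.1)).continuousAt).continuousWithinAt
  have hub : ∀ t, 0 ≤ t → u t ≤ Cy := by
    intro t ht
    have h1 : y t ≤ Cy := le_trans (le_abs_self _) (hyb t ht)
    have h2 : 0 < β / x t := div_pos hβ (hxpos t ht)
    simp only [hudef]; linarith
  have hCy0 : 0 ≤ Cy := Real.sqrt_nonneg _
  -- Einf = 0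
  have hEinf0 : Einf = 0 := by
    by_contra hne
    have hEpos : 0 < Einf := lt_of_le_of_ne hEinf_nonneg (Ne.symm hne)
    have hWcont : ContinuousAt (Wf d v₀) (xInf d v₀) := (Wf_hasDerivAt d v₀ _).continuousAt
    have hWev : ∀ᶠ z in 𝓝 (xInf d v₀), Wf d v₀ z < Einf / (2*α) := by
      have h0 : Tendsto (Wf d v₀) (𝓝 (xInf d v₀)) (𝓝 0) := by
        have := hWcont.tendsto
        rwa [Wf_xInf d v₀] at this
      exact h0.eventually_lt_const (by positivity)
    rw [Metric.eventually_nhds_iff] at hWev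
    obtain ⟨δ, hδ, hball⟩ := hWev
    -- eventually the state is δ-far from xInf
    have hyev : ∀ᶠ t in atTop, |y t| < Real.sqrt Einf := by
      have := hy0.eventually (eventually_abs_sub_lt 0 (Real.sqrt_pos.2 hEpos))
      simpa using this
    have hfar : ∀ᶠ t in atTop, 0 ≤ t ∧ δ ≤ |x t - xInf d v₀| := by
      filter_upwards [hyev, eventually_ge_atTop (0:ℝ)] with t hy ht
      refine ⟨ht, ?_⟩
      by_contra hlt
      push_neg at hlt
      have h1 : Wf d v₀ (x t) < Einf / (2*α) := hball (by rwa [Real.dist_eq])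
      have h2 : Einf ≤ (y t)^2/2 + α * Wf d v₀ (x t) := hEinf_le t ht
      have h3 : (y t)^2 < Einf := by
        calc (y t)^2 = |y t|^2 := (sq_abs _).symm
        _ < (Real.sqrt Einf)^2 := by
            apply pow_lt_pow_left₀ hy (abs_nonneg _) (by norm_num)
        _ = Einf := Real.sq_sqrt hEpos.le
      rw [lt_div_iff₀ (by positivity : (0:ℝ) < 2*α)] at h1
      linarith
    rw [eventually_atTop] at hfar
    obtain ⟨T0, hT0⟩ := hfar
    set T₁ : ℝ := max T0 0 with hT₁def
    have hT₁0 : (0:ℝ) ≤ T₁ := le_max_right _ _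
    have hT₁far : ∀ t, T₁ ≤ t → δ ≤ |x t - xInf d v₀| := fun t ht =>
      (hT0 t (le_trans (le_max_left _ _) ht)).2
    have hT₁pos : ∀ t, T₁ ≤ t → 0 ≤ t := fun t ht => le_trans hT₁0 ht
    -- dichotomy
    rcases lt_or_ge (x T₁) (xInf d v₀) with hL | hR
    · -- x stays below xInf - δ
      have hside : ∀ t, T₁ ≤ t → x t ≤ xInf d v₀ - δ := by
        intro t ht
        have hlt : x t < xInf d v₀ := by
          by_contra hge
          push_neg at hge
          obtain ⟨s, hs, hxs⟩ := intermediate_value_Icc ht (hxcOn T₁ t hT₁0) ⟨hL.le, hge⟩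
          have := hT₁far s hs.1
          rw [hxs] at this
          simp at this
          linarith
        have := hT₁far t ht
        rw [abs_sub_comm, abs_of_pos (by linarith)] at this
        linarith
      set c : ℝ := v₀ - V ((xInf d v₀ - δ)/d) with hcdef
      have hc : 0 < c := by
        have h := V_strictMono (show (xInf d v₀ - δ)/d < xInf d v₀/d by gcongr; linarith)
        rw [V_xInf hd hv₀] at h
        simp only [hcdef]
        linarith
      obtain ⟨T2, hT2⟩ := eventually_atTop.1
        (hy0.eventually (eventually_abs_sub_lt 0 (by positivity : (0:ℝ) < c/2)))
      set T₃ : ℝ := max T₁ T2 with hT₃def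
      have hT₃0 : (0:ℝ) ≤ T₃ := le_trans hT₁0 (le_max_left _ _)
      have hkey : ∀ t, T₃ ≤ t → u T₃ + (α*c/2) * (t - T₃) ≤ u t := by
        intro t ht
        have hmono : MonotoneOn (fun r => u r - (α*c/2) * r) (Icc T₃ t) := by
          refine monotoneOn_of_hasDerivWithinAt_nonneg (convex_Icc T₃ t)
            ((hucOn T₃ t hT₃0).sub ((continuous_const.mul continuous_id).continuousOn))
            (f' := fun r => -α * (V (x r / d) - v₀ + y r) - (α*c/2)) ?_ ?_
          · intro r hr
            rw [interior_Icc] at hr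
            have hr0 : 0 ≤ r := le_trans hT₃0 hr.1.le
            exact ((hud r hr0).sub ((hasDerivAt_id' r).const_mul (α*c/2))).hasDerivWithinAt.congr_deriv (by ring)
          · intro r hr
            rw [interior_Icc] at hr
            have hr0 : 0 ≤ r := le_trans hT₃0 hr.1.le
            have h1 : x r ≤ xInf d v₀ - δ :=
              hside r (le_trans (le_max_left _ _) hr.1.le)
            have h2 : V (x r / d) ≤ V ((xInf d v₀ - δ)/d) :=
              V_strictMono.monotone (by gcongr)
            have h3 : |y r - 0| < c/2 := hT2 r (le_trans (le_max_right _ _) hr.1.le)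
            rw [sub_zero, abs_lt] at h3
            simp only [hcdef] at h2 ⊢
            nlinarith
        have := hmono (left_mem_Icc.2 ht) (right_mem_Icc.2 ht) ht
        simp only at this
        linarith
      -- contradiction: u exceeds its upper bound
      have hq : 0 < α*c/2 := by positivity
      set t' : ℝ := T₃ + (Cy - u T₃ + 1)/(α*c/2) with ht'def
      have ht'ge : T₃ ≤ t' := by
        have h1 : u T₃ ≤ Cy := hub T₃ hT₃0
        have h2 : 0 ≤ (Cy - u T₃ + 1)/(α*c/2) := by
          apply div_nonneg _ hq.le
          linarith
        simp only [ht'def]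
        linarith
      have h3 := hkey t' ht'ge
      have h4 : u t' ≤ Cy := hub t' (le_trans hT₃0 ht'ge)
      rw [show t' - T₃ = (Cy - u T₃ + 1)/(α*c/2) by simp only [ht'def]; ring] at h3
      rw [mul_div_cancel₀ _ hq.ne'] at h3
      linarith
    · -- x stays above xInf + δ
      have hside : ∀ t, T₁ ≤ t → xInf d v₀ + δ ≤ x t := by
        intro t ht
        have hlt : xInf d v₀ < x t := by
          rcases lt_or_ge (xInf d v₀) (x t) with h | h
          · exact h
          · exfalso
            obtain ⟨s, hs, hxs⟩ := intermediate_value_Icc' ht (hxcOn T₁ t hT₁0) ⟨h, hR⟩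
            have := hT₁far s hs.1
            rw [hxs] at this
            simp at this
            linarith
        have := hT₁far t ht
        rw [abs_of_pos (by linarith)] at this
        linarith
      set c : ℝ := V ((xInf d v₀ + δ)/d) - v₀ with hcdef
      have hc : 0 < c := by
        have h := V_strictMono (show xInf d v₀/d < (xInf d v₀ + δ)/d by gcongr; linarith)
        rw [V_xInf hd hv₀] at h
        simp only [hcdef]
        linarith
      obtain ⟨T2, hT2⟩ := eventually_atTop.1
        (hy0.eventually (eventually_abs_sub_lt 0 (by positivity : (0:ℝ) < c/2)))
      set T₃ : ℝ := max T₁ T2 with hT₃def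
      have hT₃0 : (0:ℝ) ≤ T₃ := le_trans hT₁0 (le_max_left _ _)
      have hkey : ∀ t, T₃ ≤ t → u t ≤ u T₃ - (α*c/2) * (t - T₃) := by
        intro t ht
        have hmono : AntitoneOn (fun r => u r + (α*c/2) * r) (Icc T₃ t) := by
          refine antitoneOn_of_hasDerivWithinAt_nonpos (convex_Icc T₃ t)
            ((hucOn T₃ t hT₃0).add ((continuous_const.mul continuous_id).continuousOn))
            (f' := fun r => -α * (V (x r / d) - v₀ + y r) + (α*c/2)) ?_ ?_
          · intro r hr
            rw [interior_Icc] at hr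
            have hr0 : 0 ≤ r := le_trans hT₃0 hr.1.le
            exact ((hud r hr0).add ((hasDerivAt_id' r).const_mul (α*c/2))).hasDerivWithinAt.congr_deriv (by ring)
          · intro r hr
            rw [interior_Icc] at hr
            have hr0 : 0 ≤ r := le_trans hT₃0 hr.1.le
            have h1 : xInf d v₀ + δ ≤ x r :=
              hside r (le_trans (le_max_left _ _) hr.1.le)
            have h2 : V ((xInf d v₀ + δ)/d) ≤ V (x r / d) :=
              V_strictMono.monotone (by gcongr)
            have h3 : |y r - 0| < c/2 := hT2 r (le_trans (le_max_right _ _) hr.1.le)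
            rw [sub_zero, abs_lt] at h3
            simp only [hcdef] at h2 ⊢
            nlinarith
        have := hmono (left_mem_Icc.2 ht) (right_mem_Icc.2 ht) ht
        simp only at this
        linarith
      have hq : 0 < α*c/2 := by positivity
      -- lower bound for u
      have hlb : ∀ t, T₃ ≤ t → -Cy - β/(xInf d v₀ + δ) ≤ u t := by
        intro t ht
        have ht0 : 0 ≤ t := le_trans hT₃0 ht
        have h1 : -Cy ≤ y t := by
          have := hyb t ht0
          have := neg_abs_le (y t)
          linarith
        have h2 : xInf d v₀ + δ ≤ x t := hside t (le_trans (le_max_left _ _) ht)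
        have h3 : β / x t ≤ β/(xInf d v₀ + δ) := by
          apply div_le_div_of_nonneg_left hβ.le (by linarith) h2
        simp only [hudef]
        linarith
      set L : ℝ := -Cy - β/(xInf d v₀ + δ) with hLdef
      set t' : ℝ := T₃ + (u T₃ - L + 1)/(α*c/2) with ht'def
      have ht'ge : T₃ ≤ t' := by
        have h1 : L ≤ u T₃ := hlb T₃ le_rfl
        have h2 : 0 ≤ (u T₃ - L + 1)/(α*c/2) := by
          apply div_nonneg _ hq.le
          linarith
        simp only [ht'def]
        linarith
      have h3 := hkey t' ht'ge
      have h4 : L ≤ u t' := hlb t' ht'ge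
      rw [show t' - T₃ = (u T₃ - L + 1)/(α*c/2) by simp only [ht'def]; ring] at h3
      rw [mul_div_cancel₀ _ hq.ne'] at h3
      linarith
  -- conclude
  rw [hEinf0] at hElim
  have hWlim : Tendsto (fun t => Wf d v₀ (x t)) atTop (𝓝 0) := by
    have hup : Tendsto (fun t => E t / α) atTop (𝓝 0) := by
      have := hElim.div_const α
      simpa using this
    apply tendsto_of_tendsto_of_tendsto_of_le_of_le' tendsto_const_nhds hup
    · filter_upwards [eventually_ge_atTop (0:ℝ)] with t ht
      exact Wf_nonneg hd hv₀ (x t)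
    · filter_upwards [eventually_ge_atTop (0:ℝ)] with t ht
      rw [le_div_iff₀ hα]
      have h1 : (y t)^2/2 + α * Wf d v₀ (x t) = E t := rfl
      rw [← h1]
      nlinarith [sq_nonneg (y t)]
  have hxlim : Tendsto x atTop (𝓝 (xInf d v₀)) := by
    rw [Metric.tendsto_atTop]
    intro ε hε
    set δ' : ℝ := min (ε/2) (xInf d v₀/2) with hδ'def
    have hδ'pos : 0 < δ' := lt_min (by linarith) (by linarith)
    set cc : ℝ := min (Wf d v₀ (xInf d v₀ - δ')) (Wf d v₀ (xInf d v₀ + δ')) with hccdef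
    have hccpos : 0 < cc := lt_min
      (Wf_pos hd hv₀ (by intro h; linarith [congrArg id h]))
      (Wf_pos hd hv₀ (by intro h; linarith [congrArg id h]))
    obtain ⟨N, hN⟩ := eventually_atTop.1
      ((hWlim.eventually_lt_const hccpos).and (eventually_ge_atTop (0:ℝ)))
    refine ⟨N, fun t ht => ?_⟩
    obtain ⟨hWt, ht0⟩ := hN t ht
    rw [Real.dist_eq]
    have hlow : xInf d v₀ - δ' < x t := by
      by_contra h
      push_neg at h
      have := Wf_anti hd hv₀ h (by linarith)
      have hcc1 : cc ≤ Wf d v₀ (xInf d v₀ - δ') := min_le_left _ _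
      linarith
    have hhigh : x t < xInf d v₀ + δ' := by
      by_contra h
      push_neg at h
      have := Wf_mono hd hv₀ (by linarith : xInf d v₀ ≤ xInf d v₀ + δ') h
      have hcc2 : cc ≤ Wf d v₀ (xInf d v₀ + δ') := min_le_right _ _
      linarith
    have hδ'ε : δ' ≤ ε/2 := min_le_left _ _
    rw [abs_lt]
    constructor <;> linarith
  exact hxlim.prodMk_nhds hy0
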